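/- arXiv:1811.00288 — 4 statements merged into one kernel-verified Lean document; each statement's English description precedes it below -/
import Mathlib

section
/- Two group chains {G_ℓ} and {H_ℓ} with G₀ = H₀ are equivalent (intertwined) if and only if there exists a G₀-equivariant homeomorphism τ : lim← G₀/G_ℓ → lim← H₀/H_ℓ sending the canonical basepoint (eG_ℓ) to the canonical basepoint (eH_ℓ). -/
/-- Each finite quotient `G₀ ⧸ G ℓ` is given the discrete topology. -/
instance quotientDiscrete {G₀ : Type*} [Group G₀] (H : Subgroup G₀) :
    TopologicalSpace (G₀ ⧸ H) := ⊥

/-- The inverse limit `lim← G₀⧸G ℓ` of the quotients of a group chain, realized inside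
the product `Π ℓ, G₀ ⧸ G ℓ`. -/
def chainLimit {G₀ : Type*} [Group G₀] (G : ℕ → Subgroup G₀) : Set (∀ ℓ, G₀ ⧸ G ℓ) :=
  {x | ∀ (ℓ : ℕ) (g : G₀), x (ℓ + 1) = (QuotientGroup.mk g : G₀ ⧸ G (ℓ + 1)) →
      x ℓ = (QuotientGroup.mk g : G₀ ⧸ G ℓ)}

namespace ChainAux

variable {G₀ : Type*} [Group G₀]

instance (H : Subgroup G₀) : DiscreteTopology (G₀ ⧸ H) := ⟨rfl⟩

/-- The natural map between coset spaces induced by an inclusion of subgroups. -/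
def mapLe {A B : Subgroup G₀} (h : A ≤ B) : G₀ ⧸ A → G₀ ⧸ B :=
  Quotient.map' id (fun a b hab => by
    rw [QuotientGroup.leftRel_apply] at hab ⊢; exact h hab)

theorem mapLe_mk {A B : Subgroup G₀} (h : A ≤ B) (a : G₀) :
    mapLe h (QuotientGroup.mk a) = QuotientGroup.mk a := rfl

/-- Propagation downwards in a chain limit. -/
theorem propagate {G : ℕ → Subgroup G₀} {x : ∀ ℓ, G₀ ⧸ G ℓ} (hx : x ∈ chainLimit G) :
    ∀ n, ∀ m ≤ n, ∀ b : G₀, x n = QuotientGroup.mk b → x m = QuotientGroup.mk b := by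
  intro n
  induction n with
  | zero =>
      intro m hm b hb
      obtain rfl := Nat.le_zero.mp hm
      exact hb
  | succ n ih =>
      intro m hm b hb
      rcases eq_or_lt_of_le hm with h | h
      · exact h ▸ hb
      · exact ih m (Nat.lt_succ_iff.mp h) b (hx n b hb)

theorem exists_rep_all {G : ℕ → Subgroup G₀} {x : ∀ ℓ, G₀ ⧸ G ℓ} (hx : x ∈ chainLimit G)
    (n : ℕ) : ∃ b : G₀, ∀ m ≤ n, x m = QuotientGroup.mk b := by
  obtain ⟨b, hb⟩ := Quotient.exists_rep (x n)
  exact ⟨b, fun m hm => propagate hx n m hm b hb.symm⟩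

/-- Constant sequences lie in the chain limit. -/
theorem const_mem {G : ℕ → Subgroup G₀} (hG : Antitone G) (h : G₀) :
    (fun ℓ => (QuotientGroup.mk h : G₀ ⧸ G ℓ)) ∈ chainLimit G := fun ℓ a ha =>
  QuotientGroup.eq.mpr (hG (Nat.le_succ ℓ) (QuotientGroup.eq.mp ha))

theorem smul_mem_chainLimit {G : ℕ → Subgroup G₀} {x : ∀ ℓ, G₀ ⧸ G ℓ}
    (hx : x ∈ chainLimit G) (g : G₀) : g • x ∈ chainLimit G := by
  intro ℓ a ha
  have h1 : x (ℓ + 1) = QuotientGroup.mk (g⁻¹ * a) := by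
    have := congrArg (fun q => g⁻¹ • q) ha
    simpa [smul_smul] using this
  have h2 := hx ℓ _ h1
  have := congrArg (fun q => g • q) h2
  simpa [smul_smul, mul_assoc] using this

omit [Group G₀] in
/-- Extraction of a modulus of continuity at a point, for a continuous map into a
discrete space from a subspace of a product of discrete spaces. -/
theorem exists_modulus {Z : ℕ → Type*}
    [∀ n, TopologicalSpace (Z n)] {Y : Type*} [TopologicalSpace Y] [DiscreteTopology Y]
    (S : Set (∀ n, Z n)) (F : S → Y) (hF : Continuous F) (e : S) :
    ∃ m : ℕ, ∀ x : S, (∀ ℓ ≤ m, (x : ∀ n, Z n) ℓ = (e : ∀ n, Z n) ℓ) → F x = F e := by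
  have hU : IsOpen (F ⁻¹' {F e}) := (isOpen_discrete _).preimage hF
  rw [isOpen_induced_iff] at hU
  obtain ⟨V, hV, hVU⟩ := hU
  have heV : (e : ∀ n, Z n) ∈ V := by
    have : e ∈ F ⁻¹' {F e} := rfl
    rw [← hVU] at this; exact this
  obtain ⟨I, u, hu, hsub⟩ := (isOpen_pi_iff.mp hV) _ heV
  refine ⟨I.sup id, fun x hx => ?_⟩
  have : (x : ∀ n, Z n) ∈ V := by
    apply hsub
    intro i hi
    rw [hx i (Finset.le_sup (f := id) hi)]
    exact (hu i hi).2
  have : x ∈ F ⁻¹' {F e} := by rw [← hVU]; exact this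
  exact this
end ChainAux

open ChainAux in
/-- Two group chains `{G ℓ}` and `{H ℓ}` of finite-index subgroups with `G 0 = H 0 = G₀`
are equivalent (intertwined) if and only if there is a `G₀`-equivariant homeomorphism
`τ : lim← G₀⧸G ℓ → lim← G₀⧸H ℓ` sending the canonical basepoint `(eG ℓ)` to the
canonical basepoint `(eH ℓ)`. -/
theorem chains_equivalent_iff_pointed_equivariant_homeo {G₀ : Type*} [Group G₀]
    (G H : ℕ → Subgroup G₀) (hG : Antitone G) (hH : Antitone H)
    (hG0 : G 0 = ⊤) (hH0 : H 0 = ⊤)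
    (hGfin : ∀ ℓ, (G ℓ).FiniteIndex) (hHfin : ∀ ℓ, (H ℓ).FiniteIndex) :
    (∃ f g : ℕ → ℕ, StrictMono f ∧ StrictMono g ∧
        (∀ k, G (f (k + 1)) ≤ H (g k)) ∧ (∀ k, H (g k) ≤ G (f k)))
    ↔
    ∃ τ : chainLimit G ≃ₜ chainLimit H,
      (∀ (g : G₀) (x y : chainLimit G),
          (y : ∀ ℓ, G₀ ⧸ G ℓ) = g • (x : ∀ ℓ, G₀ ⧸ G ℓ) →
          (τ y : ∀ ℓ, G₀ ⧸ H ℓ) = g • (τ x : ∀ ℓ, G₀ ⧸ H ℓ)) ∧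
      (∀ x : chainLimit G,
          (∀ ℓ, (x : ∀ ℓ, G₀ ⧸ G ℓ) ℓ = (QuotientGroup.mk 1 : G₀ ⧸ G ℓ)) →
          (∀ ℓ, (τ x : ∀ ℓ, G₀ ⧸ H ℓ) ℓ = (QuotientGroup.mk 1 : G₀ ⧸ H ℓ))) := by
  constructor
  · rintro ⟨f, g, hf, hg, hfg, hgf⟩
    have hfk : ∀ k, k ≤ f k := fun k => hf.le_apply
    have hgk : ∀ k, k ≤ g k := fun k => hg.le_apply
    have hGH : ∀ k, G (f (k + 1)) ≤ H k := fun k => (hfg k).trans (hH (hgk k))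
    have hHG : ∀ k, H (g k) ≤ G k := fun k => (hgf k).trans (hG (hfk k))
    have tmem : ∀ x : chainLimit G,
        (fun k => mapLe (hGH k) (x.1 (f (k + 1)))) ∈ chainLimit H := by
      intro x k a ha
      obtain ⟨b, hb⟩ := exists_rep_all x.2 (f (k + 2))
      have h1 : x.1 (f (k + 1)) = QuotientGroup.mk b := hb _ (hf.monotone (by omega))
      have h2 : x.1 (f (k + 2)) = QuotientGroup.mk b := hb _ le_rfl
      have ha' : mapLe (hGH (k + 1)) (x.1 (f (k + 2))) = QuotientGroup.mk a := ha
      rw [h2, mapLe_mk] at ha'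
      show mapLe (hGH k) (x.1 (f (k + 1))) = QuotientGroup.mk a
      rw [h1, mapLe_mk]
      have ha := ha'
      exact QuotientGroup.eq.mpr (hH (Nat.le_succ k) (QuotientGroup.eq.mp ha))
    have smem : ∀ y : chainLimit H,
        (fun k => mapLe (hHG k) (y.1 (g k))) ∈ chainLimit G := by
      intro y k a ha
      obtain ⟨b, hb⟩ := exists_rep_all y.2 (g (k + 1))
      have h1 : y.1 (g k) = QuotientGroup.mk b := hb _ (hg.monotone (Nat.le_succ k))
      have h2 : y.1 (g (k + 1)) = QuotientGroup.mk b := hb _ le_rfl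
      have ha' : mapLe (hHG (k + 1)) (y.1 (g (k + 1))) = QuotientGroup.mk a := ha
      rw [h2, mapLe_mk] at ha'
      show mapLe (hHG k) (y.1 (g k)) = QuotientGroup.mk a
      rw [h1, mapLe_mk]
      have ha := ha'
      exact QuotientGroup.eq.mpr (hG (Nat.le_succ k) (QuotientGroup.eq.mp ha))
    let T : chainLimit G → chainLimit H :=
      fun x => ⟨fun k => mapLe (hGH k) (x.1 (f (k + 1))), tmem x⟩
    let S : chainLimit H → chainLimit G :=
      fun y => ⟨fun k => mapLe (hHG k) (y.1 (g k)), smem y⟩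
    have hST : ∀ x, S (T x) = x := by
      intro x
      apply Subtype.ext
      funext k
      show mapLe (hHG k) (mapLe (hGH (g k)) (x.1 (f (g k + 1)))) = x.1 k
      obtain ⟨b, hb⟩ := exists_rep_all x.2 (f (g k + 1))
      have h1 : x.1 (f (g k + 1)) = QuotientGroup.mk b := hb _ le_rfl
      have h2 : x.1 k = QuotientGroup.mk b := hb _ (by
        calc k ≤ g k := hgk k
        _ ≤ g k + 1 := Nat.le_succ _
        _ ≤ f (g k + 1) := hfk _)
      rw [h1, h2, mapLe_mk, mapLe_mk]
    have hTS : ∀ y, T (S y) = y := by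
      intro y
      apply Subtype.ext
      funext k
      show mapLe (hGH k) (mapLe (hHG (f (k + 1))) (y.1 (g (f (k + 1))))) = y.1 k
      obtain ⟨b, hb⟩ := exists_rep_all y.2 (g (f (k + 1)))
      have h1 : y.1 (g (f (k + 1))) = QuotientGroup.mk b := hb _ le_rfl
      have h2 : y.1 k = QuotientGroup.mk b := hb _ (by
        calc k ≤ k + 1 := Nat.le_succ _
        _ ≤ f (k + 1) := hfk _
        _ ≤ g (f (k + 1)) := hgk _)
      rw [h1, h2, mapLe_mk, mapLe_mk]
    have contT : Continuous T := by
      apply Continuous.subtype_mk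
      apply continuous_pi
      intro k
      exact continuous_of_discreteTopology.comp
        ((continuous_apply (f (k + 1))).comp continuous_subtype_val)
    have contS : Continuous S := by
      apply Continuous.subtype_mk
      apply continuous_pi
      intro k
      exact continuous_of_discreteTopology.comp
        ((continuous_apply (g k)).comp continuous_subtype_val)
    refine ⟨⟨⟨T, S, hST, hTS⟩, contT, contS⟩, ?_, ?_⟩
    · intro g' x y hxy
      show (T y).1 = g' • (T x).1
      funext k
      show mapLe (hGH k) (y.1 (f (k + 1))) = g' • mapLe (hGH k) (x.1 (f (k + 1)))
      obtain ⟨b, hb⟩ := Quotient.exists_rep (x.1 (f (k + 1)))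
      have hb' : x.1 (f (k + 1)) = QuotientGroup.mk b := hb.symm
      have hy : y.1 (f (k + 1)) = QuotientGroup.mk (g' * b) := by
        rw [hxy]
        show g' • (x.1 (f (k + 1))) = _
        rw [hb']
        rfl
      rw [hy, hb', mapLe_mk, mapLe_mk]
      rfl
    · intro x hx ℓ
      show mapLe (hGH ℓ) (x.1 (f (ℓ + 1))) = QuotientGroup.mk 1
      rw [hx (f (ℓ + 1)), mapLe_mk]
  · rintro ⟨τ, hequiv, hbase⟩
    classical
    set eG : chainLimit G := ⟨fun ℓ => QuotientGroup.mk 1, const_mem hG 1⟩ with heG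
    set eH : chainLimit H := ⟨fun ℓ => QuotientGroup.mk 1, const_mem hH 1⟩ with heH
    have hτe : τ eG = eH := Subtype.ext (funext fun ℓ => hbase eG (fun _ => rfl) ℓ)
    -- images of constant sequences
    have hδval : ∀ h : G₀,
        ((⟨fun ℓ => QuotientGroup.mk h, const_mem hG h⟩ : chainLimit G) : ∀ ℓ, G₀ ⧸ G ℓ)
          = h • (eG : ∀ ℓ, G₀ ⧸ G ℓ) := by
      intro h
      funext ℓ
      show (QuotientGroup.mk h : G₀ ⧸ G ℓ) = h • QuotientGroup.mk 1
      show (QuotientGroup.mk h : G₀ ⧸ G ℓ) = QuotientGroup.mk (h * 1)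
      rw [mul_one]
    have hτδ : ∀ h : G₀,
        ((τ ⟨fun ℓ => QuotientGroup.mk h, const_mem hG h⟩ : chainLimit H) : ∀ ℓ, G₀ ⧸ H ℓ)
          = fun ℓ => (QuotientGroup.mk h : G₀ ⧸ H ℓ) := by
      intro h
      have h1 := hequiv h eG _ (hδval h)
      rw [h1, hτe]
      funext ℓ
      show (QuotientGroup.mk (h * 1) : G₀ ⧸ H ℓ) = QuotientGroup.mk h
      rw [mul_one]
    have hA : ∀ n, ∃ m, G m ≤ H n := by
      intro n
      obtain ⟨m, hm⟩ := exists_modulus (chainLimit G)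
        (fun x => (τ x : ∀ ℓ, G₀ ⧸ H ℓ) n)
        (((continuous_apply n).comp continuous_subtype_val).comp τ.continuous) eG
      refine ⟨m, fun h hh => ?_⟩
      have hagree : ∀ ℓ ≤ m,
          ((⟨fun ℓ => QuotientGroup.mk h, const_mem hG h⟩ : chainLimit G) : ∀ ℓ, G₀ ⧸ G ℓ) ℓ
            = (eG : ∀ ℓ, G₀ ⧸ G ℓ) ℓ := by
        intro ℓ hℓ
        show (QuotientGroup.mk h : G₀ ⧸ G ℓ) = QuotientGroup.mk 1
        refine QuotientGroup.eq.mpr ?_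
        simpa using (G ℓ).inv_mem (hG hℓ hh)
      have key : (τ ⟨fun ℓ => QuotientGroup.mk h, const_mem hG h⟩ : ∀ ℓ, G₀ ⧸ H ℓ) n
          = (τ eG : ∀ ℓ, G₀ ⧸ H ℓ) n := hm _ hagree
      rw [congrFun (hτδ h) n] at key
      rw [hτe] at key
      have : (QuotientGroup.mk h : G₀ ⧸ H n) = QuotientGroup.mk 1 := key
      simpa using QuotientGroup.eq.mp this.symm
    -- the inverse map
    have hsymm_e : τ.symm eH = eG := by rw [← hτe, Homeomorph.symm_apply_apply]
    have hsymm_δ : ∀ h : G₀,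
        τ.symm ⟨fun ℓ => QuotientGroup.mk h, const_mem hH h⟩
          = ⟨h • (eG : ∀ ℓ, G₀ ⧸ G ℓ), smul_mem_chainLimit eG.2 h⟩ := by
      intro h
      have h2 : (⟨fun ℓ => QuotientGroup.mk h, const_mem hH h⟩ : chainLimit H)
          = τ ⟨h • (eG : ∀ ℓ, G₀ ⧸ G ℓ), smul_mem_chainLimit eG.2 h⟩ := by
        apply Subtype.ext
        have h1 := hequiv h eG ⟨h • (eG : ∀ ℓ, G₀ ⧸ G ℓ), smul_mem_chainLimit eG.2 h⟩ rfl
        rw [h1, hτe]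
        funext ℓ
        show (QuotientGroup.mk h : G₀ ⧸ H ℓ) = QuotientGroup.mk (h * 1)
        rw [mul_one]
      rw [h2, Homeomorph.symm_apply_apply]
    have hB : ∀ n, ∃ m, H m ≤ G n := by
      intro n
      obtain ⟨m, hm⟩ := exists_modulus (chainLimit H)
        (fun y => (τ.symm y : ∀ ℓ, G₀ ⧸ G ℓ) n)
        (((continuous_apply n).comp continuous_subtype_val).comp τ.symm.continuous) eH
      refine ⟨m, fun h hh => ?_⟩
      have hagree : ∀ ℓ ≤ m,
          ((⟨fun ℓ => QuotientGroup.mk h, const_mem hH h⟩ : chainLimit H) : ∀ ℓ, G₀ ⧸ H ℓ) ℓ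
            = (eH : ∀ ℓ, G₀ ⧸ H ℓ) ℓ := by
        intro ℓ hℓ
        show (QuotientGroup.mk h : G₀ ⧸ H ℓ) = QuotientGroup.mk 1
        refine QuotientGroup.eq.mpr ?_
        simpa using (H ℓ).inv_mem (hH hℓ hh)
      have key : (τ.symm ⟨fun ℓ => QuotientGroup.mk h, const_mem hH h⟩ : ∀ ℓ, G₀ ⧸ G ℓ) n
          = (τ.symm eH : ∀ ℓ, G₀ ⧸ G ℓ) n := hm _ hagree
      rw [hsymm_δ h, hsymm_e] at key
      have : (QuotientGroup.mk (h * 1) : G₀ ⧸ G n) = QuotientGroup.mk 1 := key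
      rw [mul_one] at this
      simpa using QuotientGroup.eq.mp this.symm
    choose a ha using hA
    choose b hb using hB
    let p : ℕ → ℕ × ℕ := fun k => Nat.rec (0, 0)
      (fun _ q => (max (a q.2) (q.1 + 1), max (b (max (a q.2) (q.1 + 1))) (q.2 + 1))) k
    refine ⟨fun k => (p k).1, fun k => (p k).2, ?_, ?_, ?_, ?_⟩
    · apply strictMono_nat_of_lt_succ
      intro k
      have h1 : (p (k + 1)).1 = max (a (p k).2) ((p k).1 + 1) := rfl
      rw [h1]
      exact lt_of_lt_of_le (Nat.lt_succ_self _) (le_max_right _ _)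
    · apply strictMono_nat_of_lt_succ
      intro k
      have h1 : (p (k + 1)).2 = max (b (max (a (p k).2) ((p k).1 + 1))) ((p k).2 + 1) := rfl
      rw [h1]
      exact lt_of_lt_of_le (Nat.lt_succ_self _) (le_max_right _ _)
    · intro k
      show G (max (a (p k).2) ((p k).1 + 1)) ≤ H ((p k).2)
      exact (hG (le_max_left _ _)).trans (ha _)
    · intro k
      cases k with
      | zero =>
          show H ((p 0).2) ≤ G 0
          rw [hG0]
          exact le_top
      | succ k =>
          show H (max (b (max (a (p k).2) ((p k).1 + 1))) ((p k).2 + 1))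
            ≤ G (max (a (p k).2) ((p k).1 + 1))
          exact (hH (le_max_left _ _)).trans (hb _)
end

section
/- Let (p_i) be a strictly increasing sequence of primes and define K_ℓ = (p₁p₂⋯p_ℓ)ℤ ⊆ ℤ. Then there is no injective endomorphism φ : ℤ → ℤ with finite-index image such that the chain {K_ℓ} is return equivalent to the chain {φ^ℓ(ℤ)}. Equivalently, for φ given by multiplication by m with |m| > 1, the chains {(p₁⋯p_ℓ)ℤ} and {m^ℓℤ} are not intertwined after any truncation, because the set of primes dividing some p₁⋯p_ℓ is infinite while the set of primes dividing powers of m is finite. -/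
/-- Let `(p i)` be a strictly increasing sequence of primes and `K ℓ = (p 0 ⋯ p (ℓ-1))ℤ`.
For any integer `m` with `|m| > 1` (so that multiplication by `m` is a proper injective
endomorphism of `ℤ` with finite-index image), the chain `{K ℓ}` is not return equivalent
to the chain `{m^ℓ ℤ}`: no truncations of the two chains are intertwined. -/
theorem primes_chain_not_return_equivalent_to_endomorphism_chain
    (p : ℕ → ℕ) (hmono : StrictMono p) (hprime : ∀ i, (p i).Prime)
    (m : ℤ) (hm : 1 < |m|) :
    ¬ ∃ (k k' : ℕ) (f g : ℕ → ℕ), StrictMono f ∧ StrictMono g ∧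
      (∀ i : ℕ,
        AddSubgroup.zmultiples ((∏ t ∈ Finset.range (k + f (i + 1)), (p t : ℤ))) ≤
          AddSubgroup.zmultiples (m ^ (k' + g i)) ∧
        AddSubgroup.zmultiples (m ^ (k' + g i)) ≤
          AddSubgroup.zmultiples ((∏ t ∈ Finset.range (k + f i), (p t : ℤ)))) := by
  rintro ⟨k, k', f, g, hf, hg, h⟩
  -- pick j with p j > |m|
  set j : ℕ := m.natAbs + 1 with hj
  have hpj : (m.natAbs : ℤ) < (p j : ℤ) := by
    have h1 : j ≤ p j := hmono.le_apply
    have : m.natAbs < p j := lt_of_lt_of_le (Nat.lt_succ_self _) h1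
    exact_mod_cast this
  -- pick i with j < k + f i
  set i : ℕ := j + 1 with hi
  have hji : j < k + f i := by
    have : i ≤ f i := hf.le_apply
    omega
  -- from second inclusion: product ∣ m ^ (k' + g i)
  have hmem : m ^ (k' + g i) ∈
      AddSubgroup.zmultiples ((∏ t ∈ Finset.range (k + f i), (p t : ℤ))) :=
    (h i).2 (AddSubgroup.mem_zmultiples _)
  obtain ⟨c, hc⟩ := hmem
  have hdvd : (∏ t ∈ Finset.range (k + f i), (p t : ℤ)) ∣ m ^ (k' + g i) :=
    ⟨c, by rw [← hc]; simp [zsmul_eq_mul, mul_comm]⟩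
  have hpdvd : (p j : ℤ) ∣ m ^ (k' + g i) :=
    dvd_trans (Finset.dvd_prod_of_mem (fun t => (p t : ℤ)) (Finset.mem_range.mpr hji)) hdvd
  have hprimeZ : Prime ((p j : ℤ)) := (Int.prime_iff_natAbs_prime.mpr (by simpa using hprime j))
  have hpm : (p j : ℤ) ∣ m := hprimeZ.dvd_of_dvd_pow hpdvd
  have hm0 : m ≠ 0 := by
    intro h0; rw [h0, abs_zero] at hm; exact absurd hm (by norm_num)
  have := Int.le_of_dvd (abs_pos.mpr hm0) ((dvd_abs _ _).mpr hpm)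
  rw [Int.abs_eq_natAbs] at this
  exact absurd (lt_of_lt_of_le hpj this) (lt_irrefl _)
end

section
/- In the discrete Heisenberg group ℍ, with G_ℓ = {(2^ℓ a, 2^ℓ b, 4^ℓ c)} and C_ℓ its normal core {(4^ℓ a, 4^ℓ b, 4^ℓ c)}, one has G_{2ℓ} ⊆ C_ℓ for all ℓ ≥ 0. Consequently the chain {G_ℓ} is equivalent (intertwined) with the chain of its normal cores {C_ℓ}. -/
/-- The discrete Heisenberg group: `ℤ³` with multiplication
`(a,b,c)·(a',b',c') = (a+a', b+b', c+c'+a·b')`. -/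
def Heis : Type := ℤ × ℤ × ℤ

namespace Heis

instance : Mul Heis := ⟨fun x y => (x.1 + y.1, x.2.1 + y.2.1, x.2.2 + y.2.2 + x.1 * y.2.1)⟩
instance : One Heis := ⟨((0 : ℤ), (0 : ℤ), (0 : ℤ))⟩
instance : Inv Heis := ⟨fun x => (-x.1, -x.2.1, -x.2.2 + x.1 * x.2.1)⟩

lemma mul_def (x y : Heis) :
    x * y = (x.1 + y.1, x.2.1 + y.2.1, x.2.2 + y.2.2 + x.1 * y.2.1) := rfl
lemma one_def : (1 : Heis) = ((0 : ℤ), (0 : ℤ), (0 : ℤ)) := rfl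
lemma inv_def (x : Heis) : x⁻¹ = (-x.1, -x.2.1, -x.2.2 + x.1 * x.2.1) := rfl

instance : Group Heis :=
  Group.ofLeftAxioms
    (fun a b c => by
      rw [mul_def, mul_def, mul_def, mul_def]
      refine Prod.ext ?_ (Prod.ext ?_ ?_) <;> dsimp <;> ring)
    (fun a => by
      rw [mul_def, one_def]
      refine Prod.ext ?_ (Prod.ext ?_ ?_) <;> dsimp <;> ring)
    (fun a => by
      rw [mul_def, one_def, inv_def]
      refine Prod.ext ?_ (Prod.ext ?_ ?_) <;> dsimp <;> ring)

private lemma pow4 (ℓ : ℕ) : (4 : ℤ) ^ ℓ = 2 ^ ℓ * 2 ^ ℓ := by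
  rw [← mul_pow]; norm_num

/-- The subgroup `G_ℓ = {(2^ℓ a, 2^ℓ b, 4^ℓ c) : a, b, c ∈ ℤ}` of the Heisenberg group
(the image of the ℓ-fold iterate of `(a,b,c) ↦ (2a,2b,4c)`). -/
def G (ℓ : ℕ) : Subgroup Heis where
  carrier := {x | ∃ a b c : ℤ, x = (2 ^ ℓ * a, 2 ^ ℓ * b, 4 ^ ℓ * c)}
  one_mem' := ⟨0, 0, 0, by simp [one_def]; rfl⟩
  mul_mem' := by
    rintro x y ⟨a, b, c, rfl⟩ ⟨a', b', c', rfl⟩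
    refine ⟨a + a', b + b', c + c' + a * b', ?_⟩
    refine (mul_def _ _).trans ?_
    refine Prod.ext ?_ (Prod.ext ?_ ?_) <;> dsimp <;> (try rw [pow4]) <;> ring
  inv_mem' := by
    rintro x ⟨a, b, c, rfl⟩
    refine ⟨-a, -b, -c + a * b, ?_⟩
    refine (inv_def _).trans ?_
    refine Prod.ext ?_ (Prod.ext ?_ ?_) <;> dsimp <;> (try rw [pow4]) <;> ring

/-- The subgroup `C_ℓ = {(4^ℓ a, 4^ℓ b, 4^ℓ c) : a, b, c ∈ ℤ}` of the Heisenberg group. -/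
def C (ℓ : ℕ) : Subgroup Heis where
  carrier := {x | ∃ a b c : ℤ, x = (4 ^ ℓ * a, 4 ^ ℓ * b, 4 ^ ℓ * c)}
  one_mem' := ⟨0, 0, 0, by simp [one_def]; rfl⟩
  mul_mem' := by
    rintro x y ⟨a, b, c, rfl⟩ ⟨a', b', c', rfl⟩
    refine ⟨a + a', b + b', c + c' + 4 ^ ℓ * (a * b'), ?_⟩
    refine (mul_def _ _).trans ?_
    refine Prod.ext ?_ (Prod.ext ?_ ?_) <;> dsimp <;> ring
  inv_mem' := by
    rintro x ⟨a, b, c, rfl⟩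
    refine ⟨-a, -b, -c + 4 ^ ℓ * (a * b), ?_⟩
    refine (inv_def _).trans ?_
    refine Prod.ext ?_ (Prod.ext ?_ ?_) <;> dsimp <;> ring

end Heis

lemma G_le_C (ℓ : ℕ) : Heis.G (2 * ℓ) ≤ Heis.C ℓ := by
  rintro x ⟨a, b, c, rfl⟩
  refine ⟨a, b, 4 ^ ℓ * c, ?_⟩
  have h2 : (2 : ℤ) ^ (2 * ℓ) = 4 ^ ℓ := by rw [pow_mul]; norm_num
  have h4 : (4 : ℤ) ^ (2 * ℓ) = 4 ^ ℓ * 4 ^ ℓ := by rw [two_mul, pow_add]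
  rw [h2, h4, mul_assoc]

lemma C_le_G (ℓ : ℕ) : Heis.C ℓ ≤ Heis.G ℓ := by
  rintro x ⟨a, b, c, rfl⟩
  refine ⟨2 ^ ℓ * a, 2 ^ ℓ * b, c, ?_⟩
  have h : (4 : ℤ) ^ ℓ = 2 ^ ℓ * 2 ^ ℓ := by rw [← mul_pow]; norm_num
  rw [h, mul_assoc, mul_assoc]

/-- In the discrete Heisenberg group, `G_{2ℓ} ⊆ C_ℓ ⊆ G_ℓ` for all `ℓ`; consequently
the chain `{G_ℓ}` is equivalent (intertwined) with the chain `{C_ℓ}` of its normal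
cores. -/
theorem heisenberg_chain_equivalent_normal_cores :
    (∀ ℓ : ℕ, Heis.G (2 * ℓ) ≤ Heis.C ℓ) ∧
    (∀ ℓ : ℕ, Heis.C ℓ ≤ Heis.G ℓ) ∧
    (∃ f g : ℕ → ℕ, StrictMono f ∧ StrictMono g ∧
      (∀ k, Heis.G (f (k + 1)) ≤ Heis.C (g k)) ∧
      (∀ k, Heis.C (g k) ≤ Heis.G (f k))) := by
  refine ⟨G_le_C, C_le_G, fun k => 2 ^ k, fun k => 2 ^ k, ?_, ?_, ?_, ?_⟩
  · exact fun a b h => Nat.pow_lt_pow_right one_lt_two h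
  · exact fun a b h => Nat.pow_lt_pow_right one_lt_two h
  · intro k
    show Heis.G (2 ^ (k + 1)) ≤ Heis.C (2 ^ k)
    rw [pow_succ, Nat.mul_comm]
    exact G_le_C (2 ^ k)
  · exact fun k => C_le_G (2 ^ k)
end

section
/- Let G ≤ GL(n, ℤ), H = ℤⁿ ⋊ G, p > 1, and φ(n, g) = (p·n, g). Then the kernel of the group chain {φ^ℓ(H)}, namely ⋂_{ℓ≥0} φ^ℓ(H) = ⋂_{ℓ≥0} (p^ℓℤⁿ ⋊ G), equals {0} ⋊ G ≅ G. In particular, if G is finite, H is scale-invariant. -/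
variable (n : ℕ) (G : Subgroup (Matrix.GeneralLinearGroup (Fin n) ℤ))

/-- The semidirect product `H = ℤⁿ ⋊ G` for a subgroup `G ≤ GL(n, ℤ)`, with product
`(n₁, g₁)·(n₂, g₂) = (n₁ + g₁·n₂, g₁g₂)` where `g·v` is matrix-vector multiplication. -/
def SDProd : Type := (Fin n → ℤ) × G

namespace SDProd

variable {n G}

/-- The matrix action of an element of `G` on `ℤⁿ`. -/
def act (g : G) (v : Fin n → ℤ) : Fin n → ℤ :=
  ((g : Matrix.GeneralLinearGroup (Fin n) ℤ) : Matrix (Fin n) (Fin n) ℤ).mulVec v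

instance : Mul (SDProd n G) := ⟨fun x y => (x.1 + act x.2 y.1, x.2 * y.2)⟩
instance : One (SDProd n G) := ⟨(0, 1)⟩
instance : Inv (SDProd n G) := ⟨fun x => (-(act x.2⁻¹ x.1), x.2⁻¹)⟩

lemma mul_def (x y : SDProd n G) : x * y = (x.1 + act x.2 y.1, x.2 * y.2) := rfl
lemma one_def : (1 : SDProd n G) = (0, 1) := rfl
lemma inv_def (x : SDProd n G) : x⁻¹ = (-(act x.2⁻¹ x.1), x.2⁻¹) := rfl

lemma act_mul (g h : G) (v : Fin n → ℤ) : act (g * h) v = act g (act h v) := by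
  simp [act, Matrix.mulVec_mulVec]

lemma act_add (g : G) (v w : Fin n → ℤ) : act g (v + w) = act g v + act g w := by
  simp [act, Matrix.mulVec_add]

lemma act_zero (g : G) : act g (0 : Fin n → ℤ) = 0 := by simp [act]

lemma act_one (v : Fin n → ℤ) : act (1 : G) v = v := by simp [act, Matrix.one_mulVec]

lemma act_inv_act (g : G) (v : Fin n → ℤ) : act g (act g⁻¹ v) = v := by
  rw [← act_mul, mul_inv_cancel, act_one]

instance : Group (SDProd n G) :=
  Group.ofLeftAxioms
    (fun x y z => Prod.ext
      (show x.1 + act x.2 y.1 + act (x.2 * y.2) z.1 = x.1 + act x.2 (y.1 + act y.2 z.1) by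
        rw [act_add, act_mul, add_assoc])
      (show x.2 * y.2 * z.2 = x.2 * (y.2 * z.2) from mul_assoc _ _ _))
    (fun x => Prod.ext (show (0 : Fin n → ℤ) + act 1 x.1 = x.1 by rw [act_one, zero_add])
      (show (1 : G) * x.2 = x.2 from one_mul _))
    (fun x => Prod.ext
      (show -(act x.2⁻¹ x.1) + act x.2⁻¹ x.1 = 0 from neg_add_cancel _)
      (show x.2⁻¹ * x.2 = 1 from inv_mul_cancel _))

/-- The self-embedding `(v, g) ↦ (p·v, g)` of `H = ℤⁿ ⋊ G`. -/
def phi (p : ℕ) : Monoid.End (SDProd n G) :=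
  { toFun := fun x => ((p : ℤ) • x.1, x.2)
    map_one' := Prod.ext (show (p : ℤ) • (0 : Fin n → ℤ) = 0 from smul_zero _) rfl
    map_mul' := fun x y => by
      simp only [mul_def]
      refine Prod.ext ?_ rfl
      dsimp
      rw [smul_add]
      congr 1
      exact (Matrix.mulVec_smul _ _ _).symm }

/-- The embedding `G → ℤⁿ ⋊ G`, `g ↦ (0, g)`, with image `{0} ⋊ G`. -/
def inrHom : G →* SDProd n G :=
  { toFun := fun g => (0, g)
    map_one' := rfl
    map_mul' := fun g h =>
      Prod.ext (show (0 : Fin n → ℤ) = 0 + act g 0 by rw [act_zero, add_zero]) rfl }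

end SDProd

/-- For `G ≤ GL(n, ℤ)`, `H = ℤⁿ ⋊ G`, `p > 1` and `φ(v, g) = (p·v, g)`, the kernel of
the group chain `{φ^ℓ(H)}`, namely `⋂_{ℓ≥0} (p^ℓℤⁿ ⋊ G)`, equals `{0} ⋊ G ≅ G`. -/
theorem semidirect_chain_kernel (n : ℕ)
    (G : Subgroup (Matrix.GeneralLinearGroup (Fin n) ℤ)) (p : ℕ) (hp : 1 < p) :
    (⨅ ℓ : ℕ, MonoidHom.range ((SDProd.phi (n := n) (G := G) p) ^ ℓ)) =
      MonoidHom.range (SDProd.inrHom (n := n) (G := G)) ∧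
    Nonempty (MonoidHom.range (SDProd.inrHom (n := n) (G := G)) ≃* G) := by
  have hpow : ∀ (ℓ : ℕ) (x : SDProd n G),
      ((SDProd.phi (n := n) (G := G) p) ^ ℓ) x = (((p : ℤ) ^ ℓ) • x.1, x.2) := by
    intro ℓ
    induction ℓ with
    | zero => intro x; simp; rfl
    | succ k ih =>
      intro x
      rw [pow_succ, Monoid.End.coe_mul, Function.comp_apply, ih]
      refine Prod.ext ?_ rfl
      show (p : ℤ) ^ k • ((p : ℤ) • x.1) = _
      rw [smul_smul, ← pow_succ]
  constructor
  · ext x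
    simp only [Subgroup.mem_iInf, MonoidHom.mem_range]
    constructor
    · intro h
      have hzero : x.1 = 0 := by
        funext i
        by_contra hne
        obtain ⟨y, hy⟩ := h ((x.1 i).natAbs)
        erw [hpow] at hy
        have hdvd : ((p : ℤ) ^ (x.1 i).natAbs) ∣ x.1 i := by
          refine ⟨y.1 i, ?_⟩
          have := congrArg (fun z => z.1 i) hy
          simpa [Pi.smul_apply, smul_eq_mul] using this.symm
        have hle : (p : ℤ) ^ (x.1 i).natAbs ≤ |x.1 i| := by
          exact Int.le_of_dvd (abs_pos.mpr hne) ((dvd_abs _ _).mpr hdvd)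
        have hlt : ((x.1 i).natAbs : ℤ) < (p : ℤ) ^ (x.1 i).natAbs := by
          exact_mod_cast Nat.lt_pow_self (n := (x.1 i).natAbs) hp
        rw [Int.abs_eq_natAbs] at hle
        omega
      exact ⟨x.2, Prod.ext hzero.symm rfl⟩
    · rintro ⟨g, rfl⟩ ℓ
      refine ⟨((0 : Fin n → ℤ), g), ?_⟩
      erw [hpow]
      show (_, _) = ((0 : Fin n → ℤ), g)
      simp
  · have hinj : Function.Injective (SDProd.inrHom (n := n) (G := G)) := by
      intro a b hab
      exact congrArg Prod.snd hab
    exact ⟨(MonoidHom.ofInjective hinj).symm⟩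
end
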